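/- arXiv:1301.1076 — 4 statements merged into one kernel-verified Lean document; each statement's English description precedes it below -/
import Mathlib

section
/- Let G be a group and let ρ, φ, ψ : G → ℤ/2ℤ be group homomorphisms (to the additive group of the field 𝔽₂). Let L = ker(ρ) ∩ ker(φ) and let X²(L) be the subgroup of G generated by the squares of all elements of L; X²(L) is a normal subgroup of G, and ρ, φ, ψ induce homomorphisms ρ̄, φ̄, ψ̄ on the quotient Q = G/X²(L). Then there exists a function F : G → ℤ/2ℤ with φ(g)φ(h) + ρ(g)φ(h) + ρ(g)ψ(h) = F(gh) + F(g) + F(h) for all g, h ∈ G if and only if there exists a function F̄ : Q → ℤ/2ℤ with φ̄(x)φ̄(y) + ρ̄(x)φ̄(y) + ρ̄(x)ψ̄(y) = F̄(xy) + F̄(x) + F̄(y) for all x, y ∈ Q. -/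
/-- `X²(L)`: the subgroup generated by the squares of all elements of `L`. -/
def sqSubgroup {G : Type*} [Group G] (L : Subgroup G) : Subgroup G :=
  Subgroup.closure ((fun k => k ^ 2) '' (L : Set G))

/-- If `L` is normal in `G` then `X²(L)`, being characteristic in `L`, is normal in `G`. -/
instance sqSubgroup_normal {G : Type*} [Group G] (L : Subgroup G) [hL : L.Normal] :
    (sqSubgroup L).Normal := by
  constructor
  intro n hn g
  have h1 : (MulAut.conj g).toMonoidHom n ∈
      (sqSubgroup L).map (MulAut.conj g).toMonoidHom :=
    Subgroup.mem_map_of_mem _ hn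
  rw [sqSubgroup, MonoidHom.map_closure] at h1
  have h2 : Subgroup.closure ((MulAut.conj g).toMonoidHom ''
      ((fun k => k ^ 2) '' (L : Set G))) ≤ sqSubgroup L := by
    apply (Subgroup.closure_le _).mpr
    rintro _ ⟨_, ⟨k, hk, rfl⟩, rfl⟩
    apply Subgroup.subset_closure
    exact ⟨(MulAut.conj g) k, hL.conj_mem k hk g, (map_pow (MulAut.conj g) k 2).symm⟩
  simpa using h2 h1

lemma sqSubgroup_le_ker {G : Type*} [Group G] (L : Subgroup G)
    (χ : G →* Multiplicative (ZMod 2)) : sqSubgroup L ≤ χ.ker := by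
  rw [sqSubgroup, Subgroup.closure_le]
  rintro _ ⟨k, -, rfl⟩
  have h2 : ∀ x : Multiplicative (ZMod 2), x ^ 2 = 1 := by decide
  simp only [SetLike.mem_coe, MonoidHom.mem_ker, map_pow, h2]

/-- for homomorphisms `ρ, φ, ψ : G → ℤ/2ℤ`, with
`L = ker ρ ∩ ker φ` and `Q = G/X²(L)`, and `ρ̄, φ̄, ψ̄` the induced homomorphisms
on `Q`, the 2-cocycle `(g,h) ↦ φ(g)φ(h) + ρ(g)φ(h) + ρ(g)ψ(h)` is a coboundary
on `G` iff the corresponding 2-cocycle on `Q` is a coboundary. -/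
theorem stmt3 (G : Type*) [Group G] (ρ φ ψ : G →* Multiplicative (ZMod 2))
    (ρbar φbar ψbar : G ⧸ sqSubgroup (ρ.ker ⊓ φ.ker) →* Multiplicative (ZMod 2))
    (hρbar : ∀ g : G, ρbar (QuotientGroup.mk g) = ρ g)
    (hφbar : ∀ g : G, φbar (QuotientGroup.mk g) = φ g)
    (hψbar : ∀ g : G, ψbar (QuotientGroup.mk g) = ψ g) :
    (∃ F : G → ZMod 2, ∀ g h : G,
        Multiplicative.toAdd (φ g) * Multiplicative.toAdd (φ h) +
          Multiplicative.toAdd (ρ g) * Multiplicative.toAdd (φ h) +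
          Multiplicative.toAdd (ρ g) * Multiplicative.toAdd (ψ h) =
        F (g * h) + F g + F h) ↔
    (∃ Fbar : G ⧸ sqSubgroup (ρ.ker ⊓ φ.ker) → ZMod 2,
      ∀ x y : G ⧸ sqSubgroup (ρ.ker ⊓ φ.ker),
        Multiplicative.toAdd (φbar x) * Multiplicative.toAdd (φbar y) +
          Multiplicative.toAdd (ρbar x) * Multiplicative.toAdd (φbar y) +
          Multiplicative.toAdd (ρbar x) * Multiplicative.toAdd (ψbar y) =
        Fbar (x * y) + Fbar x + Fbar y) := by
  set N := sqSubgroup (ρ.ker ⊓ φ.ker) with hN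
  have two : ∀ a : ZMod 2, a + a = 0 := by decide
  have hρN : ∀ n ∈ N, Multiplicative.toAdd (ρ n) = 0 := fun n hn => by
    have := sqSubgroup_le_ker (ρ.ker ⊓ φ.ker) ρ hn
    rw [MonoidHom.mem_ker] at this; rw [this]; rfl
  have hφN : ∀ n ∈ N, Multiplicative.toAdd (φ n) = 0 := fun n hn => by
    have := sqSubgroup_le_ker (ρ.ker ⊓ φ.ker) φ hn
    rw [MonoidHom.mem_ker] at this; rw [this]; rfl
  have hψN : ∀ n ∈ N, Multiplicative.toAdd (ψ n) = 0 := fun n hn => by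
    have := sqSubgroup_le_ker (ρ.ker ⊓ φ.ker) ψ hn
    rw [MonoidHom.mem_ker] at this; rw [this]; rfl
  have cancel : ∀ a b c : ZMod 2, 0 = a + b + c → a = b + c := by decide
  constructor
  · rintro ⟨F, hF⟩
    -- F is additive on cosets: F (g * n) = F g + F n for n ∈ N
    have hadd : ∀ (g : G) (n : G), n ∈ N → F (g * n) = F g + F n := by
      intro g n hn
      have := hF g n
      rw [hφN n hn, hψN n hn] at this
      simp only [mul_zero, add_zero] at this
      exact cancel _ _ _ this
    have hF1 : F 1 = 0 := by
      have := hF 1 1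
      simp only [map_one, toAdd_one, mul_zero, zero_mul, add_zero, zero_add, mul_one] at this
      have h := cancel _ _ _ this
      rw [two] at h; exact h
    -- F vanishes on N
    have hFN : ∀ n ∈ N, F n = 0 := by
      intro n hn
      induction hn using Subgroup.closure_induction with
      | mem x hx =>
        obtain ⟨k, hk, rfl⟩ := hx
        have hk1 : ρ k = 1 := hk.1
        have hk2 : φ k = 1 := hk.2
        have := hF k k
        rw [hk1, hk2] at this
        simp only [toAdd_one, mul_zero, zero_mul, add_zero, zero_add] at this
        have h := cancel _ _ _ this
        rw [two] at h
        simpa [pow_two] using h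
      | one => exact hF1
      | mul x y hx hy ihx ihy =>
        rw [hadd x y hy, ihx, ihy, add_zero]
      | inv x hx ihx =>
        have := hadd x x⁻¹ (inv_mem hx)
        rw [mul_inv_cancel, hF1, ihx, zero_add] at this
        exact this.symm
    -- F is constant on cosets
    have hconst : ∀ g : G, F (QuotientGroup.mk g : G ⧸ N).out = F g := by
      intro g
      obtain ⟨⟨n, hn⟩, h⟩ := QuotientGroup.mk_out_eq_mul N g
      rw [h, hadd g n hn, hFN n hn, add_zero]
    refine ⟨fun x => F x.out, fun x y => ?_⟩
    have hxy : x * y = QuotientGroup.mk (x.out * y.out) := by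
      rw [QuotientGroup.mk_mul, QuotientGroup.out_eq', QuotientGroup.out_eq']
    conv_lhs => rw [← QuotientGroup.out_eq' x, ← QuotientGroup.out_eq' y]
    rw [hxy]
    dsimp only
    simp only [hρbar, hφbar, hψbar, hconst]
    exact hF x.out y.out
  · rintro ⟨Fbar, hFbar⟩
    refine ⟨fun g => Fbar (QuotientGroup.mk g), fun g h => ?_⟩
    have := hFbar (QuotientGroup.mk g) (QuotientGroup.mk h)
    rw [← QuotientGroup.mk_mul] at this
    simpa only [hρbar, hφbar, hψbar] using this
end

section
/- Let Θ ∈ GL(2,ℤ) be hyperbolic, i.e. det Θ = ±1 and no eigenvalue of Θ is a root of unity (equivalently: if det Θ = 1 then |tr Θ| > 2, and if det Θ = −1 then tr Θ ≠ 0). Let π_Θ = ℤ² ⋊_Θ ℤ, and let N be a nontrivial normal subgroup of π_Θ of infinite index. Then N is contained in the subgroup A = ℤ² × {0}, and N has finite index in A. In particular N is abelian. -/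
open Matrix

section Aux


lemma ch2 (M : Matrix (Fin 2) (Fin 2) ℤ) : M * M = M.trace • M - M.det • 1 := by
  ext i j
  simp only [Matrix.sub_apply, Matrix.smul_apply, smul_eq_mul, Matrix.mul_apply,
    Fin.sum_univ_two, Matrix.trace_fin_two, Matrix.det_fin_two, Matrix.one_apply]
  fin_cases i <;> fin_cases j <;> simp <;> ring

lemma traceRec (M : Matrix (Fin 2) (Fin 2) ℤ) (n : ℕ) :
    (M ^ (n + 2)).trace = M.trace * (M ^ (n + 1)).trace - M.det * (M ^ n).trace := by
  have h : M ^ (n + 2) = M.trace • M ^ (n + 1) - M.det • M ^ n := by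
    have h0 : M ^ (n + 2) = M ^ n * (M * M) := by rw [pow_add, pow_two]
    rw [h0, ch2, Matrix.mul_sub, mul_smul_comm, mul_smul_comm, mul_one, pow_succ]
  rw [h, Matrix.trace_sub, Matrix.trace_smul, Matrix.trace_smul, smul_eq_mul, smul_eq_mul]

lemma trace_pow_one' (M : Matrix (Fin 2) (Fin 2) ℤ) : (M ^ 0).trace = 2 := by
  simp [Matrix.trace_one]

lemma lemA (M : Matrix (Fin 2) (Fin 2) ℤ) (h1 : M.det = 1) (h3 : 3 ≤ M.trace) :
    ∀ n : ℕ, 2 ≤ (M ^ n).trace ∧ (M ^ n).trace + 1 ≤ (M ^ (n + 1)).trace := by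
  intro n
  induction n with
  | zero => (constructor <;> simp [trace_pow_one']) <;> omega
  | succ n ih =>
    obtain ⟨h2, hs⟩ := ih
    have ht := traceRec M n
    rw [h1, one_mul] at ht
    refine ⟨by omega, by nlinarith [h2, hs, ht, h3]⟩

lemma lemB (M : Matrix (Fin 2) (Fin 2) ℤ) (h1 : M.det = -1) (h3 : 1 ≤ M.trace) :
    ∀ n : ℕ, 1 ≤ (M ^ (n + 1)).trace ∧ 3 ≤ (M ^ (n + 2)).trace := by
  intro n
  induction n with
  | zero =>
    have ht := traceRec M 0
    rw [h1, trace_pow_one'] at ht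
    have hp : (M ^ (0 + 1)).trace = M.trace := by norm_num
    rw [hp] at ht ⊢
    exact ⟨h3, by nlinarith [ht, h3]⟩
  | succ n ih =>
    obtain ⟨ha, hb⟩ := ih
    have ht := traceRec M (n + 1)
    rw [h1] at ht
    have hb' : 3 ≤ (M ^ (n + 1 + 1)).trace := hb
    exact ⟨by linarith [hb'], by nlinarith [ha, hb', ht, h3]⟩

lemma trace_neg_pow (M : Matrix (Fin 2) (Fin 2) ℤ) (n : ℕ) :
    ((-M) ^ n).trace = (-1) ^ n * (M ^ n).trace := by
  have h : (-M) ^ n = ((-1 : ℤ) ^ n) • (M ^ n) := by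
    rw [← neg_one_smul ℤ M, smul_pow]
  rw [h, Matrix.trace_smul, smul_eq_mul]

lemma det_neg2 (M : Matrix (Fin 2) (Fin 2) ℤ) : (-M).det = M.det := by
  simp [Matrix.det_fin_two, Matrix.neg_apply]

lemma trace_neg2 (M : Matrix (Fin 2) (Fin 2) ℤ) : (-M).trace = -M.trace := by
  simp [Matrix.trace_fin_two, Matrix.neg_apply]

-- key lemma over ℕ
lemma keyNat (M : Matrix (Fin 2) (Fin 2) ℤ)
    (hM : (M.det = 1 ∧ 2 < |M.trace|) ∨ (M.det = -1 ∧ M.trace ≠ 0))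
    (n : ℕ) (hn : n ≠ 0) : (M ^ n).det - (M ^ n).trace + 1 ≠ 0 := by
  obtain ⟨m, rfl⟩ : ∃ m, n = m + 1 := ⟨n - 1, by omega⟩
  rcases hM with ⟨hd, htr⟩ | ⟨hd, htr⟩
  · -- det = 1
    have hdp : (M ^ (m + 1)).det = 1 := by rw [Matrix.det_pow, hd, one_pow]
    rw [hdp]
    have habs : 3 ≤ |(M ^ (m + 1)).trace| := by
      rcases abs_cases M.trace with ⟨he, _⟩ | ⟨he, _⟩
      · -- trace ≥ 3
        have h3 : 3 ≤ M.trace := by omega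
        have := lemA M hd h3 m
        have := lemA M hd h3 (m + 1)
        have h2 : 3 ≤ (M ^ (m + 1)).trace := by omega
        rcases abs_cases ((M ^ (m + 1)).trace) with ⟨h,_⟩|⟨h,_⟩ <;> omega
      · -- trace ≤ -3
        have h3 : 3 ≤ (-M).trace := by rw [trace_neg2]; omega
        have hd' : (-M).det = 1 := by rw [det_neg2, hd]
        have := lemA (-M) hd' h3 m
        have := lemA (-M) hd' h3 (m + 1)
        have h2 : 3 ≤ ((-M) ^ (m + 1)).trace := by omega
        have he2 : ((-M) ^ (m + 1)).trace = (-1) ^ (m + 1) * (M ^ (m + 1)).trace :=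
          trace_neg_pow M (m + 1)
        rcases Int.even_or_odd (m + 1) with hpar | hpar
        · rw [(Even.neg_one_pow (by exact_mod_cast hpar) : ((-1 : ℤ)) ^ (m+1) = 1), one_mul] at he2
          rcases abs_cases ((M ^ (m + 1)).trace) with ⟨h,_⟩|⟨h,_⟩ <;> omega
        · rw [(Odd.neg_one_pow (by exact_mod_cast hpar) : ((-1 : ℤ)) ^ (m+1) = -1)] at he2
          rcases abs_cases ((M ^ (m + 1)).trace) with ⟨h,_⟩|⟨h,_⟩ <;> omega
    rcases abs_cases ((M ^ (m + 1)).trace) with ⟨h,_⟩|⟨h,_⟩ <;> omega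
  · -- det = -1
    have hdp : (M ^ (m + 1)).det = (-1 : ℤ) ^ (m + 1) := by rw [Matrix.det_pow, hd]
    have key : (1 ≤ |(M ^ (m + 1)).trace|) ∧ (m + 1 ≥ 2 → 3 ≤ |(M ^ (m + 1)).trace|) := by
      rcases le_or_gt 1 M.trace with h3 | h3
      · have h := lemB M hd h3 m
        refine ⟨le_trans h.1 (le_abs_self _), ?_⟩
        intro hm
        obtain ⟨m', rfl⟩ : ∃ m', m = m' + 1 := ⟨m - 1, by omega⟩
        have h'' : 3 ≤ (M ^ (m' + 1 + 1)).trace := (lemB M hd h3 m').2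
        exact le_trans h'' (le_abs_self _)
      · have h3' : 1 ≤ (-M).trace := by rw [trace_neg2]; omega
        have hd' : (-M).det = -1 := by rw [det_neg2, hd]
        have h := lemB (-M) hd' h3' m
        have he2 : ((-M) ^ (m + 1)).trace = (-1) ^ (m + 1) * (M ^ (m + 1)).trace :=
          trace_neg_pow M (m + 1)
        have habs : |((-M) ^ (m + 1)).trace| = |(M ^ (m + 1)).trace| := by
          rw [he2, abs_mul, abs_pow, abs_neg, abs_one, one_pow, one_mul]
        refine ⟨?_, ?_⟩
        · rw [← habs]
          exact le_trans h.1 (le_abs_self _)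
        · intro hm
          obtain ⟨m', rfl⟩ : ∃ m', m = m' + 1 := ⟨m - 1, by omega⟩
          have h'' : 3 ≤ ((-M) ^ (m' + 1 + 1)).trace := (lemB (-M) hd' h3' m').2
          have habs' : |((-M) ^ (m' + 1 + 1)).trace| = |(M ^ (m' + 1 + 1)).trace| := by
            have he3 : ((-M) ^ (m' + 1 + 1)).trace = (-1) ^ (m' + 1 + 1) * (M ^ (m' + 1 + 1)).trace :=
              trace_neg_pow M (m' + 1 + 1)
            rw [he3, abs_mul, abs_pow, abs_neg, abs_one, one_pow, one_mul]
          rw [← habs']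
          exact le_trans h'' (le_abs_self _)
    rw [hdp]
    rcases Nat.even_or_odd (m + 1) with hpar | hpar
    · rw [(Even.neg_one_pow (by exact_mod_cast hpar) : ((-1 : ℤ)) ^ (m + 1) = 1)]
      obtain ⟨k, hk⟩ := hpar
      have h2 := key.2 (by omega)
      rcases abs_cases ((M ^ (m + 1)).trace) with ⟨h,_⟩|⟨h,_⟩ <;> omega
    · rw [(Odd.neg_one_pow (by exact_mod_cast hpar) : ((-1 : ℤ)) ^ (m + 1) = -1)]
      have h1 := key.1
      rcases abs_cases ((M ^ (m + 1)).trace) with ⟨h,_⟩|⟨h,_⟩ <;> omega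

lemma detSubOne (X : Matrix (Fin 2) (Fin 2) ℤ) :
    (X - 1).det = X.det - X.trace + 1 := by
  simp [Matrix.det_fin_two, Matrix.trace_fin_two, Matrix.sub_apply, Matrix.one_apply]
  ring

-- inverse of a GL(2,ℤ) element: trace and det
lemma invVal (U : GL (Fin 2) ℤ) (hd : U.val.det = 1 ∨ U.val.det = -1) :
    ((U⁻¹ : GL (Fin 2) ℤ).val : Matrix (Fin 2) (Fin 2) ℤ) = U.val.det • U.val.adjugate := by
  have h : U.val * (U.val.det • U.val.adjugate) = 1 := by
    rw [Matrix.mul_smul, Matrix.mul_adjugate, smul_smul]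
    rcases hd with h | h <;> rw [h] <;> norm_num
  exact (Units.inv_eq_of_mul_eq_one_right h : _)

lemma traceInv (U : GL (Fin 2) ℤ) (hd : U.val.det = 1 ∨ U.val.det = -1) :
    ((U⁻¹ : GL (Fin 2) ℤ).val).trace = U.val.det * U.val.trace := by
  rw [invVal U hd, Matrix.trace_smul, smul_eq_mul]
  congr 1
  rw [Matrix.adjugate_fin_two]
  simp [Matrix.trace_fin_two]
  ring

lemma detInv (U : GL (Fin 2) ℤ) (hd : U.val.det = 1 ∨ U.val.det = -1) :
    ((U⁻¹ : GL (Fin 2) ℤ).val).det = U.val.det := by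
  rw [invVal U hd, Matrix.det_smul, Matrix.det_adjugate]
  rcases hd with h | h <;> rw [h] <;> norm_num

abbrev Hyp (M : Matrix (Fin 2) (Fin 2) ℤ) : Prop :=
  (M.det = 1 ∧ 2 < |M.trace|) ∨ (M.det = -1 ∧ M.trace ≠ 0)

lemma hyp_det (M : Matrix (Fin 2) (Fin 2) ℤ) (h : Hyp M) : M.det = 1 ∨ M.det = -1 := by
  rcases h with ⟨h, _⟩ | ⟨h, _⟩ <;> [left; right] <;> exact h

lemma hypInv (U : GL (Fin 2) ℤ) (h : Hyp U.val) : Hyp ((U⁻¹ : GL (Fin 2) ℤ).val) := by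
  have hd := hyp_det _ h
  rcases h with ⟨h1, h2⟩ | ⟨h1, h2⟩
  · left
    refine ⟨by rw [detInv U hd, h1], ?_⟩
    rw [traceInv U hd, h1, one_mul]
    exact h2
  · right
    refine ⟨by rw [detInv U hd, h1], ?_⟩
    rw [traceInv U hd, h1]
    simpa using h2


lemma keyInt (U : GL (Fin 2) ℤ) (h : Hyp U.val) (b : ℤ) (hb : b ≠ 0) :
    (((U ^ b : GL (Fin 2) ℤ).val : Matrix (Fin 2) (Fin 2) ℤ) - 1).det ≠ 0 := by
  rcases lt_or_gt_of_ne hb with hneg | hpos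
  · obtain ⟨n, hn⟩ : ∃ n : ℕ, b = -(n : ℤ) := ⟨b.natAbs, by omega⟩
    have hU : (U ^ b : GL (Fin 2) ℤ) = (U⁻¹) ^ n := by
      rw [hn]
      rw [_root_.zpow_neg, ← _root_.inv_zpow, _root_.zpow_natCast]
    rw [hU]
    have hval : ((U⁻¹ ^ n : GL (Fin 2) ℤ).val : Matrix (Fin 2) (Fin 2) ℤ)
        = ((U⁻¹ : GL (Fin 2) ℤ).val) ^ n := by
      simp [Units.val_pow_eq_pow_val]
    rw [hval, detSubOne]
    exact keyNat _ (hypInv U h) n (by omega)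
  · obtain ⟨n, hn⟩ : ∃ n : ℕ, b = (n : ℤ) := ⟨b.natAbs, by omega⟩
    have hU : (U ^ b : GL (Fin 2) ℤ) = U ^ n := by rw [hn, _root_.zpow_natCast]
    rw [hU]
    have hval : ((U ^ n : GL (Fin 2) ℤ).val : Matrix (Fin 2) (Fin 2) ℤ)
        = (U.val) ^ n := by simp [Units.val_pow_eq_pow_val]
    rw [hval, detSubOne]
    exact keyNat _ h n (by omega)


lemma sq_diff_four (u v : ℤ) (h : u ^ 2 - v ^ 2 = 4) : v = 0 := by
  by_contra hv
  have h1 : u ^ 2 = v ^ 2 + 4 := by omega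
  have hv1 : 1 ≤ v ^ 2 := by rcases lt_or_gt_of_ne hv with hlt | hgt <;> nlinarith
  -- |u| > |v|
  have habs : v ^ 2 < u ^ 2 := by omega
  have h2 : |v| < |u| := by
    have := sq_abs u; have := sq_abs v
    nlinarith [abs_nonneg u, abs_nonneg v]
  have h3 : |v| + 1 ≤ |u| := by omega
  have h4 : (|v| + 1) ^ 2 ≤ |u| ^ 2 := by nlinarith [abs_nonneg v]
  have h5 : |u| ^ 2 = u ^ 2 := sq_abs u
  have h6 : |v| ^ 2 = v ^ 2 := sq_abs v
  have h7 : 2 * |v| + 1 ≤ 4 := by nlinarith [h4, h5, h6, h1]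
  have hb0 : 1 ≤ |v| := abs_pos.mpr hv
  have h8 : |v| = 1 := by omega
  have h9 : v ^ 2 = 1 := by rw [← h6, h8]; norm_num
  -- u^2 = 5, impossible
  have h10 : u ^ 2 = 5 := by omega
  have h11 : |u| ≥ 3 := by nlinarith [abs_nonneg u]
  nlinarith

lemma fact2 (U : GL (Fin 2) ℤ) (h : Hyp (U.val : Matrix (Fin 2) (Fin 2) ℤ))
    (v : Fin 2 → ℤ) (hv : v ≠ 0) :
    (Matrix.of ![![v 0, ((U.val : Matrix (Fin 2) (Fin 2) ℤ).mulVec v) 0],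
                 ![v 1, ((U.val : Matrix (Fin 2) (Fin 2) ℤ).mulVec v) 1]]).det ≠ 0 := by
  set M : Matrix (Fin 2) (Fin 2) ℤ := (U.val : Matrix (Fin 2) (Fin 2) ℤ) with hM
  set a := M 0 0; set b := M 0 1; set c := M 1 0; set d := M 1 1
  set x := v 0; set y := v 1
  have hdet : M.det = a * d - b * c := Matrix.det_fin_two M
  have htr : M.trace = a + d := Matrix.trace_fin_two M
  have hmv0 : M.mulVec v 0 = a * x + b * y := by
    simp [Matrix.mulVec, dotProduct, Fin.sum_univ_two]; rfl
  have hmv1 : M.mulVec v 1 = c * x + d * y := by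
    simp [Matrix.mulVec, dotProduct, Fin.sum_univ_two]; rfl
  have hc : c ≠ 0 := by
    intro hc0
    have hd1 : a * d = M.det := by rw [hdet, hc0]; ring
    rcases h with ⟨h1, h2⟩ | ⟨h1, h2⟩
    · rw [h1] at hd1
      have ha := Int.isUnit_iff.mp (IsUnit.of_mul_eq_one (a := a) d hd1)
      have hd' : d = a := by rcases ha with h' | h' <;> rw [h'] at hd1 ⊢ <;> omega
      rw [htr, hd'] at h2
      rcases ha with h' | h' <;> rw [h'] at h2 <;> norm_num at h2
    · rw [h1] at hd1
      have ha : IsUnit a := IsUnit.of_mul_eq_one (a := a) (-d) (by rw [mul_neg, hd1]; norm_num)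
      have hd' : d = -a := by
        rcases Int.isUnit_iff.mp ha with h' | h' <;> rw [h'] at hd1 ⊢ <;> omega
      rw [htr, hd'] at h2
      omega
  intro hdet0
  have hQ : c * x ^ 2 + (d - a) * x * y - b * y ^ 2 = 0 := by
    have hd2 : x * (M.mulVec v 1) - (M.mulVec v 0) * y = 0 := by
      simpa [Matrix.det_fin_two_of] using hdet0
    rw [hmv0, hmv1] at hd2
    linear_combination hd2
  by_cases hy : y = 0
  · have hx : x = 0 := by
      rw [hy] at hQ
      have : c * x ^ 2 = 0 := by linarith [hQ]
      have := mul_eq_zero.mp this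
      rcases this with h' | h'
      · exact absurd h' hc
      · exact (pow_eq_zero_iff two_ne_zero).mp h'
    exact hv (by funext i; fin_cases i <;> simpa)
  · set u := 2 * c * x + (d - a) * y with hu
    set Δ := (a + d) ^ 2 - 4 * (a * d - b * c) with hΔ
    have key : u ^ 2 = Δ * y ^ 2 := by
      rw [hu, hΔ]; linear_combination (4 * c) * hQ
    have hdvd : y ^ 2 ∣ u ^ 2 := ⟨Δ, by linarith [key]⟩
    have hyu : y ∣ u := (Int.pow_dvd_pow_iff (two_ne_zero)).mp hdvd
    obtain ⟨k, hk⟩ := hyu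
    have hy2 : (y:ℤ) ^ 2 ≠ 0 := pow_ne_zero 2 hy
    have hk2 : k ^ 2 = Δ :=
      mul_left_cancel₀ hy2 (by linear_combination key - (y * k + u) * hk)
    rcases h with ⟨h1, h2⟩ | ⟨h1, h2⟩
    · have hΔ2 : k ^ 2 = M.trace ^ 2 - 4 := by
        rw [hk2, hΔ, ← htr, ← hdet, h1]; ring
      have hk0 : k = 0 := sq_diff_four M.trace k (by linarith [hΔ2])
      rw [hk0] at hΔ2
      norm_num at hΔ2
      rcases abs_cases M.trace with ⟨he, _⟩ | ⟨he, _⟩ <;> nlinarith [hΔ2, h2]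
    · have hΔ2 : k ^ 2 = M.trace ^ 2 + 4 := by
        rw [hk2, hΔ, ← htr, ← hdet, h1]; ring
      have ht0 : M.trace = 0 := sq_diff_four k M.trace (by linarith [hΔ2])
      exact h2 ht0

-- finite index criterion in ℤ²
lemma indexFI (P : Matrix (Fin 2) (Fin 2) ℤ) (hP : P.det ≠ 0)
    (H : Subgroup (Multiplicative (Fin 2 → ℤ)))
    (h : ∀ w : Fin 2 → ℤ, Multiplicative.ofAdd (P.mulVec w) ∈ H) : H.index ≠ 0 := by
  set d : ℤ := P.det with hd
  haveI : NeZero d.natAbs := ⟨Int.natAbs_ne_zero.mpr hP⟩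
  let F : (Fin 2 → ℤ) →+ (Fin 2 → ZMod d.natAbs) :=
    { toFun := fun v i => ((v i : ℤ) : ZMod d.natAbs)
      map_zero' := by funext i; simp
      map_add' := by intro x y; funext i; push_cast; simp }
  let f : Multiplicative (Fin 2 → ℤ) →* Multiplicative (Fin 2 → ZMod d.natAbs) :=
    AddMonoidHom.toMultiplicative F
  have hker : f.ker ≤ H := by
    intro x hx
    have hx' : ∀ i, ((Multiplicative.toAdd x) i : ZMod d.natAbs) = 0 := by
      intro i
      have := congrFun (congrArg Multiplicative.toAdd (MonoidHom.mem_ker.mp hx)) i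
      simpa [f, F] using this
    have hdvd : ∀ i, d ∣ (Multiplicative.toAdd x) i := by
      intro i
      have := (ZMod.intCast_zmod_eq_zero_iff_dvd _ _).mp (hx' i)
      exact (Int.natAbs_dvd).mp this
    choose c hc using hdvd
    have hx2 : Multiplicative.toAdd x = P.mulVec (P.adjugate.mulVec c) := by
      rw [Matrix.mulVec_mulVec, Matrix.mul_adjugate, ← hd]
      funext i
      simp [Matrix.smul_mulVec, Matrix.one_mulVec, hc i, Pi.smul_apply, smul_eq_mul]
    have : x = Multiplicative.ofAdd (P.mulVec (P.adjugate.mulVec c)) := by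
      rw [← hx2]; rfl
    rw [this]
    exact h _
  have h1 : H.index ∣ f.ker.index := Subgroup.index_dvd_of_le hker
  have h3 : f.ker.index ≠ 0 := by
    rw [Subgroup.index_ker]
    exact Nat.card_ne_zero.mpr ⟨inferInstance, inferInstance⟩
  exact fun h0 => h3 (Nat.eq_zero_of_zero_dvd (h0 ▸ h1))

lemma indexFIZ (H : Subgroup (Multiplicative ℤ)) (b : ℤ) (hb : b ≠ 0)
    (h : Multiplicative.ofAdd b ∈ H) : H.index ≠ 0 := by
  haveI : NeZero b.natAbs := ⟨Int.natAbs_ne_zero.mpr hb⟩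
  let f : Multiplicative ℤ →* Multiplicative (ZMod b.natAbs) :=
    AddMonoidHom.toMultiplicative (Int.castAddHom (ZMod b.natAbs))
  have hker : f.ker ≤ H := by
    intro x hx
    have hx' : ((Multiplicative.toAdd x : ℤ) : ZMod b.natAbs) = 0 := by
      have := MonoidHom.mem_ker.mp hx
      simpa [f] using congrArg Multiplicative.toAdd this
    have hdvd : b ∣ Multiplicative.toAdd x :=
      (Int.natAbs_dvd).mp ((ZMod.intCast_zmod_eq_zero_iff_dvd _ _).mp hx')
    obtain ⟨c, hc⟩ := hdvd
    have : x = (Multiplicative.ofAdd b) ^ c := by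
      rw [← ofAdd_zsmul]
      have : Multiplicative.toAdd x = c • b := by rw [hc]; simp [mul_comm]
      rw [← this]; rfl
    rw [this]
    exact zpow_mem h c
  have h1 : H.index ∣ f.ker.index := Subgroup.index_dvd_of_le hker
  have h3 : f.ker.index ≠ 0 := by
    rw [Subgroup.index_ker]
    exact Nat.card_ne_zero.mpr ⟨inferInstance, inferInstance⟩
  exact fun h0 => h3 (Nat.eq_zero_of_zero_dvd (h0 ▸ h1))

end Aux




/-- The additive automorphism of `ℤ²` given by a matrix `Θ ∈ GL(2,ℤ)`. -/
def thetaAddAut (Θ : GL (Fin 2) ℤ) : (Fin 2 → ℤ) ≃+ (Fin 2 → ℤ) where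
  toFun v := (Θ : Matrix (Fin 2) (Fin 2) ℤ).mulVec v
  invFun v := (Θ⁻¹ : GL (Fin 2) ℤ).1.mulVec v
  left_inv v := by
    simp only [Matrix.mulVec_mulVec, Units.inv_mul, Matrix.one_mulVec]
  right_inv v := by
    simp only [Matrix.mulVec_mulVec, Units.mul_inv, Matrix.one_mulVec]
  map_add' v w := by simpa using Matrix.mulVec_add (Θ : Matrix (Fin 2) (Fin 2) ℤ) v w

/-- `π_Θ = ℤ² ⋊_Θ ℤ`, the semidirect product in which the generator of `ℤ`
acts on `ℤ²` by the matrix `Θ`. -/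
abbrev piTheta (Θ : GL (Fin 2) ℤ) : Type :=
  SemidirectProduct (Multiplicative (Fin 2 → ℤ)) (Multiplicative ℤ)
    (zpowersHom (MulAut (Multiplicative (Fin 2 → ℤ)))
      (AddEquiv.toMultiplicative (thetaAddAut Θ)))


/-- The subgroup `A = ℤ² × {0}` of `π_Θ`. -/
def zSqSubgroup (Θ : GL (Fin 2) ℤ) : Subgroup (piTheta Θ) :=
  (SemidirectProduct.inl : Multiplicative (Fin 2 → ℤ) →* piTheta Θ).range

-- the homomorphism GL → MulAut
def thetaHom : GL (Fin 2) ℤ →* MulAut (Multiplicative (Fin 2 → ℤ)) where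
  toFun U := AddEquiv.toMultiplicative (thetaAddAut U)
  map_one' := by
    ext x
    simp [thetaAddAut, Matrix.one_mulVec]
  map_mul' U V := by
    ext x
    simp [thetaAddAut, Matrix.mulVec_mulVec]
    rename_i i
    fin_cases i <;> simp [Matrix.mul_apply, Fin.sum_univ_two] <;> ring

lemma thetaHom_apply (U : GL (Fin 2) ℤ) (v : Fin 2 → ℤ) :
    thetaHom U (Multiplicative.ofAdd v)
      = Multiplicative.ofAdd ((U.val : Matrix (Fin 2) (Fin 2) ℤ).mulVec v) := rfl

lemma phi_apply (Θ : GL (Fin 2) ℤ) (b : ℤ) (v : Fin 2 → ℤ) :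
    (zpowersHom (MulAut (Multiplicative (Fin 2 → ℤ)))
      (AddEquiv.toMultiplicative (thetaAddAut Θ))) (Multiplicative.ofAdd b)
      (Multiplicative.ofAdd v)
      = Multiplicative.ofAdd (((Θ ^ b : GL (Fin 2) ℤ).val : Matrix (Fin 2) (Fin 2) ℤ).mulVec v) := by
  have h1 : (zpowersHom (MulAut (Multiplicative (Fin 2 → ℤ)))
      (AddEquiv.toMultiplicative (thetaAddAut Θ))) (Multiplicative.ofAdd b)
      = (thetaHom Θ) ^ b := by
    rw [zpowersHom_apply]
    rfl
  rw [h1, ← map_zpow thetaHom Θ b]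
  exact thetaHom_apply _ v

open SemidirectProduct in
lemma conj_inl {N G : Type*} [CommGroup N] [Group G] {φ : G →* MulAut N}
    (x : N ⋊[φ] G) (n : N) :
    x * inl n * x⁻¹ = inl (φ x.right n) := by
  ext
  · simp only [mul_left, inv_left, mul_right, left_inl, right_inl, mul_one]
    have h : (φ x.right) ((φ x.right⁻¹) x.left⁻¹) = x.left⁻¹ := by
      rw [map_inv φ]
      exact (φ x.right).apply_symm_apply x.left⁻¹
    rw [h, mul_comm x.left, mul_assoc, mul_inv_cancel, mul_one]
  · simp

lemma transferIndex (Θ : GL (Fin 2) ℤ) (N : Subgroup (piTheta Θ)) :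
    (N.subgroupOf (zSqSubgroup Θ)).index
      = (N.comap (SemidirectProduct.inl : Multiplicative (Fin 2 → ℤ) →* piTheta Θ)).index := by
  let f := (SemidirectProduct.inl : Multiplicative (Fin 2 → ℤ) →* piTheta Θ).rangeRestrict
  have hsurj : Function.Surjective f := MonoidHom.rangeRestrict_surjective _
  have hcomap : (N.subgroupOf (zSqSubgroup Θ)).comap f
      = N.comap (SemidirectProduct.inl : Multiplicative (Fin 2 → ℤ) →* piTheta Θ) := by
    ext w
    simp only [Subgroup.mem_comap, Subgroup.mem_subgroupOf]
    rfl
  rw [← Subgroup.index_comap_of_surjective (H := N.subgroupOf (zSqSubgroup Θ)) hsurj]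
  exact congrArg Subgroup.index hcomap

open SemidirectProduct in
/-- if `Θ ∈ GL(2,ℤ)` is hyperbolic (no eigenvalue a root of unity;
equivalently `det Θ = 1` and `|tr Θ| > 2`, or `det Θ = −1` and `tr Θ ≠ 0`) and `N`
is a nontrivial normal subgroup of infinite index in `π_Θ = ℤ² ⋊_Θ ℤ`, then
`N ≤ A = ℤ² × {0}`, `N` has finite index in `A`, and `N` is abelian. -/
theorem stmt13 (Θ : GL (Fin 2) ℤ)
    (hhyp : ((Θ : Matrix (Fin 2) (Fin 2) ℤ).det = 1 ∧
        2 < |(Θ : Matrix (Fin 2) (Fin 2) ℤ).trace|) ∨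
      ((Θ : Matrix (Fin 2) (Fin 2) ℤ).det = -1 ∧
        (Θ : Matrix (Fin 2) (Fin 2) ℤ).trace ≠ 0))
    (N : Subgroup (piTheta Θ)) (hN : N.Normal) (hnt : N ≠ ⊥) (hinf : N.index = 0) :
    N ≤ zSqSubgroup Θ ∧ (N.subgroupOf (zSqSubgroup Θ)).index ≠ 0 ∧
      ∀ x ∈ N, ∀ y ∈ N, x * y = y * x := by
  classical
  haveI := hN
  have hΘ : Hyp (Θ.val : Matrix (Fin 2) (Fin 2) ℤ) := hhyp
  -- Step 1: N ≤ A
  have hNA : N ≤ zSqSubgroup Θ := by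
    by_contra hc
    obtain ⟨g, hgN, hgA⟩ := SetLike.not_le_iff_exists.mp hc
    set b : ℤ := Multiplicative.toAdd g.right with hb
    have hbne : b ≠ 0 := by
      intro h0
      apply hgA
      refine ⟨g.left, ?_⟩
      have hgr : g.right = 1 := by
        have : Multiplicative.ofAdd b = g.right := ofAdd_toAdd g.right
        rw [h0] at this
        exact this.symm
      ext
      · simp
      · simp [hgr]
    -- commutators give a finite-index piece of A inside N
    have hcomm : ∀ w : Fin 2 → ℤ,
        (inl (Multiplicative.ofAdd
          ((((Θ ^ b : GL (Fin 2) ℤ).val : Matrix (Fin 2) (Fin 2) ℤ) - 1).mulVec w))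
            : piTheta Θ) ∈ N := by
      intro w
      set w' : Multiplicative (Fin 2 → ℤ) := Multiplicative.ofAdd w with hw'
      have h1 : g * (inl w' * g⁻¹ * (inl w')⁻¹) ∈ N :=
        N.mul_mem hgN (hN.conj_mem _ (N.inv_mem hgN) _)
      have h2 : g * (inl w' * g⁻¹ * (inl w')⁻¹) = (g * inl w' * g⁻¹) * (inl w')⁻¹ := by
        group
      rw [h2, conj_inl g w'] at h1
      have h3 : (zpowersHom (MulAut (Multiplicative (Fin 2 → ℤ)))
          (AddEquiv.toMultiplicative (thetaAddAut Θ))) g.right w'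
          = Multiplicative.ofAdd
              (((Θ ^ b : GL (Fin 2) ℤ).val : Matrix (Fin 2) (Fin 2) ℤ).mulVec w) := by
        rw [hw', ← ofAdd_toAdd g.right, ← hb]
        exact phi_apply Θ b w
      rw [h3] at h1
      have h4 : (inl (Multiplicative.ofAdd
            (((Θ ^ b : GL (Fin 2) ℤ).val : Matrix (Fin 2) (Fin 2) ℤ).mulVec w)) : piTheta Θ)
          * (inl w')⁻¹
          = inl (Multiplicative.ofAdd
              ((((Θ ^ b : GL (Fin 2) ℤ).val : Matrix (Fin 2) (Fin 2) ℤ) - 1).mulVec w)) := by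
        rw [← _root_.map_inv, ← _root_.map_mul]
        congr 1
        rw [hw']
        rw [← ofAdd_neg, ← ofAdd_add]
        congr 1
        rw [Matrix.sub_mulVec, Matrix.one_mulVec]
        abel
      rw [h4] at h1
      exact h1
    -- N has finite relative index in A
    have hrel : (N.subgroupOf (zSqSubgroup Θ)).index ≠ 0 := by
      rw [transferIndex]
      apply indexFI (((Θ ^ b : GL (Fin 2) ℤ).val : Matrix (Fin 2) (Fin 2) ℤ) - 1)
        (keyInt Θ hΘ b hbne)
      intro w
      exact hcomm w
    -- A ⊔ N has finite index
    have hsup : ((zSqSubgroup Θ) ⊔ N).index ≠ 0 := by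
      have hker : (SemidirectProduct.rightHom :
            piTheta Θ →* Multiplicative ℤ).ker ≤ zSqSubgroup Θ ⊔ N := by
        rw [← SemidirectProduct.range_inl_eq_ker_rightHom]
        exact le_sup_left
      rw [← Subgroup.index_map_eq _ SemidirectProduct.rightHom_surjective hker]
      apply indexFIZ _ b hbne
      refine ⟨g, Subgroup.mem_sup_right hgN, ?_⟩
      show g.right = Multiplicative.ofAdd b
      rw [hb, ofAdd_toAdd]
    -- contradiction with infinite index
    have hmul := Subgroup.relIndex_mul_index (le_sup_right : N ≤ zSqSubgroup Θ ⊔ N)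
    rw [Subgroup.relIndex_sup_right, hinf] at hmul
    have : N.relIndex (zSqSubgroup Θ) ≠ 0 := hrel
    rcases Nat.mul_eq_zero.mp hmul with h0 | h0
    · exact this h0
    · exact hsup h0
  -- Step 2: finite relative index
  have hrel2 : (N.subgroupOf (zSqSubgroup Θ)).index ≠ 0 := by
    obtain ⟨a, ha⟩ := Subgroup.ne_bot_iff_exists_ne_one.mp hnt
    obtain ⟨vx, hvx⟩ := hNA a.2
    set v : Fin 2 → ℤ := Multiplicative.toAdd vx with hv
    have hvne : v ≠ 0 := by
      intro h0
      apply ha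
      have : vx = 1 := by
        have : Multiplicative.ofAdd v = vx := ofAdd_toAdd vx
        rw [h0] at this
        exact this.symm
      apply Subtype.ext
      rw [← hvx, this, _root_.map_one]
      simp
    have hxN : (inl vx : piTheta Θ) ∈ N := by rw [hvx]; exact a.2
    have hx2 : (inl (Multiplicative.ofAdd
        ((Θ.val : Matrix (Fin 2) (Fin 2) ℤ).mulVec v)) : piTheta Θ) ∈ N := by
      have h1 := hN.conj_mem _ hxN (inr (Multiplicative.ofAdd (1 : ℤ)))
      rw [conj_inl] at h1
      have h2 : (zpowersHom (MulAut (Multiplicative (Fin 2 → ℤ)))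
          (AddEquiv.toMultiplicative (thetaAddAut Θ)))
            ((inr (Multiplicative.ofAdd (1 : ℤ)) : piTheta Θ)).right vx
          = Multiplicative.ofAdd ((Θ.val : Matrix (Fin 2) (Fin 2) ℤ).mulVec v) := by
        have h3 : ((inr (Multiplicative.ofAdd (1 : ℤ)) : piTheta Θ)).right
            = Multiplicative.ofAdd (1 : ℤ) := rfl
        rw [h3, ← ofAdd_toAdd vx, ← hv]
        have := phi_apply Θ 1 v
        rw [zpow_one] at this
        exact this
      rw [h2] at h1
      exact h1
    rw [transferIndex]
    set w2 : Fin 2 → ℤ := (Θ.val : Matrix (Fin 2) (Fin 2) ℤ).mulVec v with hw2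
    apply indexFI (Matrix.of ![![v 0, w2 0], ![v 1, w2 1]]) (fact2 Θ hΘ v hvne)
    intro c
    have hPc : (Matrix.of ![![v 0, w2 0], ![v 1, w2 1]]).mulVec c
        = c 0 • v + c 1 • w2 := by
      funext i
      fin_cases i <;>
        simp [Matrix.mulVec, dotProduct, Fin.sum_univ_two, Pi.smul_apply, smul_eq_mul] <;>
        ring
    rw [hPc]
    have : Multiplicative.ofAdd (c 0 • v + c 1 • w2)
        = (Multiplicative.ofAdd v) ^ (c 0) * (Multiplicative.ofAdd w2) ^ (c 1) := by
      rw [← ofAdd_zsmul, ← ofAdd_zsmul, ← ofAdd_add]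
    rw [Subgroup.mem_comap, this, _root_.map_mul, _root_.map_zpow, _root_.map_zpow]
    have hv' : (inl (Multiplicative.ofAdd v) : piTheta Θ) ∈ N := by
      rw [hv, ofAdd_toAdd]; exact hxN
    exact N.mul_mem (N.zpow_mem hv' _) (N.zpow_mem hx2 _)
  refine ⟨hNA, hrel2, ?_⟩
  intro x hx y hy
  obtain ⟨ax, hax⟩ := hNA hx
  obtain ⟨ay, hay⟩ := hNA hy
  rw [← hax, ← hay, ← _root_.map_mul, ← _root_.map_mul, mul_comm]
end

section
/- Let Θ ∈ GL(2,ℤ) be hyperbolic, i.e. det Θ = ±1 and no eigenvalue of Θ is a root of unity (equivalently: if det Θ = 1 then |tr Θ| > 2, and if det Θ = −1 then tr Θ ≠ 0), and let π_Θ = ℤ² ⋊_Θ ℤ. Then: (a) every subgroup of finite index in π_Θ can be generated by three elements; (b) every proper subgroup of infinite index in π_Θ can be generated by two elements. -/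
open Subgroup

/-- Transfer finiteness of quotients from an additive subgroup to a corresponding
multiplicative subgroup. -/
lemma finite_mult_quot {M : Type*} [AddCommGroup M] (A : AddSubgroup M)
    (P : Subgroup (Multiplicative M))
    (hmem : ∀ x : M, Multiplicative.ofAdd x ∈ P ↔ x ∈ A)
    (hfin : Finite (M ⧸ A)) : Finite (Multiplicative M ⧸ P) := by
  have hresp : ∀ a b : M, (QuotientAddGroup.leftRel A).r a b →
      (QuotientGroup.leftRel P).r (Multiplicative.ofAdd a) (Multiplicative.ofAdd b) := by
    intro a b hab
    rw [QuotientAddGroup.leftRel_apply] at hab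
    rw [QuotientGroup.leftRel_apply]
    have : (Multiplicative.ofAdd a)⁻¹ * Multiplicative.ofAdd b
        = Multiplicative.ofAdd (-a + b) := rfl
    rw [this, hmem]
    exact hab
  let F : (M ⧸ A) → (Multiplicative M ⧸ P) :=
    Quotient.map' Multiplicative.ofAdd hresp
  have hsurj : Function.Surjective F := by
    intro q
    induction q using QuotientGroup.induction_on with
    | H z =>
      exact ⟨QuotientAddGroup.mk (Multiplicative.toAdd z), rfl⟩
  exact Finite.of_surjective F hsurj

/-- Second isomorphism theorem, index version: if `H.relindex K ≠ 0` and `K` is normal,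
then `H.relindex (H ⊔ K) ≠ 0`. -/
lemma relindex_sup_ne_zero {G : Type*} [Group G] (H K : Subgroup G) [K.Normal]
    (h : H.relIndex K ≠ 0) : H.relIndex (H ⊔ K) ≠ 0 := by
  have hfin : Finite (K ⧸ H.subgroupOf K) := by
    rw [Subgroup.relIndex, Subgroup.index_eq_card] at h
    exact Nat.finite_of_card_ne_zero h
  have hresp : ∀ a b : K, (QuotientGroup.leftRel (H.subgroupOf K)).r a b →
      (QuotientGroup.leftRel (H.subgroupOf (H ⊔ K))).r
        ⟨a.1, Subgroup.mem_sup_right a.2⟩ ⟨b.1, Subgroup.mem_sup_right b.2⟩ := by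
    intro a b hab
    rw [QuotientGroup.leftRel_apply] at hab ⊢
    exact hab
  let F : (K ⧸ H.subgroupOf K) → ((H ⊔ K : Subgroup G) ⧸ H.subgroupOf (H ⊔ K)) :=
    Quotient.map' (fun k => ⟨k.1, Subgroup.mem_sup_right k.2⟩) hresp
  have hsurj : Function.Surjective F := by
    intro q
    induction q using QuotientGroup.induction_on with
    | H z =>
      have hz : (z : G) ∈ (↑(K ⊔ H) : Set G) := by
        rw [sup_comm]; exact z.2
      rw [Subgroup.normal_mul] at hz
      obtain ⟨k, hk, x, hx, hkx⟩ := hz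
      refine ⟨QuotientGroup.mk ⟨k, hk⟩, ?_⟩
      have : F (QuotientGroup.mk ⟨k, hk⟩) = QuotientGroup.mk ⟨k, Subgroup.mem_sup_right hk⟩ := rfl
      rw [this]
      apply (QuotientGroup.eq).mpr
      show (⟨k, _⟩ : (H ⊔ K : Subgroup G))⁻¹ * z ∈ H.subgroupOf (H ⊔ K)
      have : ((⟨k, Subgroup.mem_sup_right hk⟩ : (H ⊔ K : Subgroup G))⁻¹ * z : G) = k⁻¹ * z := rfl
      rw [Subgroup.mem_subgroupOf]
      show (k:G)⁻¹ * (z:G) ∈ H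
      rw [← hkx]
      simpa using hx
  have : Finite ((H ⊔ K : Subgroup G) ⧸ H.subgroupOf (H ⊔ K)) := Finite.of_surjective F hsurj
  rw [Subgroup.relIndex, Subgroup.index_eq_card]
  exact Nat.card_ne_zero.mpr ⟨inferInstance, this⟩

open Subgroup

lemma image_cyclic {G : Type*} [Group G] (f : G →* Multiplicative ℤ) (H : Subgroup G) :
    ∃ h ∈ H, Subgroup.map f H = Subgroup.zpowers (f h) := by
  obtain ⟨a, ha⟩ := Int.subgroup_cyclic (Subgroup.toAddSubgroup' (Subgroup.map f H))
  have haK : Multiplicative.ofAdd a ∈ Subgroup.map f H := by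
    show a ∈ Subgroup.toAddSubgroup' (Subgroup.map f H)
    rw [ha]
    exact AddSubgroup.subset_closure rfl
  obtain ⟨h, hh, hfh⟩ := haK
  refine ⟨h, hh, ?_⟩
  ext x
  rw [Subgroup.mem_zpowers_iff]
  have hx : x ∈ Subgroup.map f H ↔ Multiplicative.toAdd x ∈ AddSubgroup.closure {a} := by
    rw [← ha]; rfl
  rw [hx, ← AddSubgroup.zmultiples_eq_closure, AddSubgroup.mem_zmultiples_iff]
  constructor
  · rintro ⟨k, hk⟩
    refine ⟨k, ?_⟩
    rw [hfh]
    have : (Multiplicative.ofAdd a) ^ k = Multiplicative.ofAdd (k • a) := (ofAdd_zsmul k a).symm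
    rw [this, hk]
    rfl
  · rintro ⟨k, hk⟩
    refine ⟨k, ?_⟩
    rw [hfh] at hk
    have : (Multiplicative.ofAdd a) ^ k = Multiplicative.ofAdd (k • a) := (ofAdd_zsmul k a).symm
    rw [this] at hk
    rw [← hk]
    rfl

lemma gen_lemma {G : Type*} [Group G] (f : G →* Multiplicative ℤ) (H : Subgroup G)
    (h : G) (hh : h ∈ H) (hmap : Subgroup.map f H = Subgroup.zpowers (f h))
    (T : Finset G) (hT : Subgroup.closure (T : Set G) = H ⊓ f.ker) :
    Subgroup.closure (insert h (T : Set G)) = H := by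
  apply le_antisymm
  · rw [Subgroup.closure_le]
    intro x hx
    rcases hx with rfl | hx
    · exact hh
    · have : x ∈ Subgroup.closure (T : Set G) := Subgroup.subset_closure hx
      rw [hT] at this
      exact this.1
  · intro x hx
    have hfx : f x ∈ Subgroup.zpowers (f h) := by
      rw [← hmap]; exact Subgroup.mem_map_of_mem f hx
    obtain ⟨n, hn⟩ := Subgroup.mem_zpowers_iff.mp hfx
    have hy : x * (h ^ n)⁻¹ ∈ H ⊓ f.ker := by
      constructor
      · exact H.mul_mem hx (H.inv_mem (H.zpow_mem hh n))
      · show f (x * (h ^ n)⁻¹) = 1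
        rw [map_mul, map_inv, map_zpow, hn]
        exact mul_inv_cancel _
    rw [← hT] at hy
    have h1 : x * (h ^ n)⁻¹ ∈ Subgroup.closure (insert h (T : Set G)) :=
      Subgroup.closure_mono (Set.subset_insert h _) hy
    have h2 : h ∈ Subgroup.closure (insert h (T : Set G)) :=
      Subgroup.subset_closure (Set.mem_insert h _)
    have := Subgroup.mul_mem _ h1 (Subgroup.zpow_mem _ h2 n)
    simpa using this

lemma index_zpowers_ne_zero (g : Multiplicative ℤ) (hg : g ≠ 1) :
    (Subgroup.zpowers g).index ≠ 0 := by
  set a : ℤ := Multiplicative.toAdd g with ha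
  have ha0 : a ≠ 0 := by
    intro h0
    apply hg
    have : g = Multiplicative.ofAdd a := rfl
    rw [this, h0]
    rfl
  haveI : NeZero a.natAbs := ⟨Int.natAbs_ne_zero.mpr ha0⟩
  have hfin : Finite (ℤ ⧸ AddSubgroup.zmultiples a) :=
    Finite.of_equiv _ (Int.quotientZMultiplesEquivZMod a).toEquiv.symm
  have hfin2 : Finite (Multiplicative ℤ ⧸ Subgroup.zpowers g) := by
    apply finite_mult_quot (AddSubgroup.zmultiples a) _ _ hfin
    intro x
    rw [Subgroup.mem_zpowers_iff, AddSubgroup.mem_zmultiples_iff]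
    constructor
    · rintro ⟨k, hk⟩
      refine ⟨k, ?_⟩
      have : g ^ k = Multiplicative.ofAdd (k • a) := by
        rw [ha]
        exact (ofAdd_zsmul k a).symm
      rw [this] at hk
      simpa [mul_comm] using congrArg Multiplicative.toAdd hk
    · rintro ⟨k, hk⟩
      refine ⟨k, ?_⟩
      have : g ^ k = Multiplicative.ofAdd (k • a) := by
        rw [ha]
        exact (ofAdd_zsmul k a).symm
      rw [this, hk]
  rw [Subgroup.index_eq_card]
  exact Nat.card_ne_zero.mpr ⟨inferInstance, hfin2⟩

lemma closure_ofAdd_image {M : Type*} [AddCommGroup M] (s : Set M) :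
    Subgroup.closure (Multiplicative.ofAdd '' s) = AddSubgroup.toSubgroup (AddSubgroup.closure s) := by
  apply le_antisymm
  · rw [Subgroup.closure_le]
    rintro x ⟨y, hy, rfl⟩
    show y ∈ AddSubgroup.closure s
    exact AddSubgroup.subset_closure hy
  · intro x hx
    have hx' : Multiplicative.toAdd x ∈ AddSubgroup.closure s := hx
    have : AddSubgroup.closure s ≤ Subgroup.toAddSubgroup' (Subgroup.closure (Multiplicative.ofAdd '' s)) := by
      rw [AddSubgroup.closure_le]
      intro y hy
      show Multiplicative.ofAdd y ∈ Subgroup.closure (Multiplicative.ofAdd '' s)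
      exact Subgroup.subset_closure ⟨y, hy, rfl⟩
    exact this hx'

/-- Structure of subgroups of `Multiplicative (Fin 2 → ℤ)`. -/
lemma subgroup_mult_Z2 (P : Subgroup (Multiplicative (Fin 2 → ℤ))) :
    ∃ T : Finset (Multiplicative (Fin 2 → ℤ)), T.card ≤ 2 ∧
      Subgroup.closure (T : Set (Multiplicative (Fin 2 → ℤ))) = P ∧
      (T.card ≤ 1 ∨ P.index ≠ 0) := by
  classical
  set A : Submodule ℤ (Fin 2 → ℤ) :=
    AddSubgroup.toIntSubmodule (Subgroup.toAddSubgroup' P) with hA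
  obtain ⟨m, bA⟩ := Submodule.basisOfPid (Pi.basisFun ℤ (Fin 2)) A
  have li : LinearIndependent ℤ (fun i => (bA i : Fin 2 → ℤ)) :=
    bA.linearIndependent.map' A.subtype (Submodule.ker_subtype A)
  have hm : m ≤ 2 := by
    have := li.fintype_card_le_finrank
    simpa using this
  have hspan : A = Submodule.span ℤ (Set.range fun i => (bA i : Fin 2 → ℤ)) := by
    conv_lhs => rw [← Submodule.map_subtype_top A, ← bA.span_eq]
    rw [Submodule.map_span, ← Set.range_comp]
    rfl
  -- the finset of generators
  set T : Finset (Multiplicative (Fin 2 → ℤ)) :=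
    Finset.image (fun i => Multiplicative.ofAdd ((bA i : Fin 2 → ℤ))) Finset.univ with hT
  have hcard : T.card ≤ m := by
    simpa using Finset.card_image_le (s := (Finset.univ : Finset (Fin m)))
  have hPA : P = AddSubgroup.toSubgroup (A.toAddSubgroup) := by
    have : (A.toAddSubgroup) = Subgroup.toAddSubgroup' P := by
      simp [hA]
    rw [this]
    exact ((AddSubgroup.toSubgroup).apply_symm_apply P).symm
  have hclos : Subgroup.closure (T : Set (Multiplicative (Fin 2 → ℤ))) = P := by
    have hTset : (T : Set (Multiplicative (Fin 2 → ℤ)))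
        = Multiplicative.ofAdd '' (Set.range fun i => (bA i : Fin 2 → ℤ)) := by
      rw [hT]
      rw [Finset.coe_image, Finset.coe_univ, Set.image_univ]
      exact Set.range_comp _ _
    rw [hTset, closure_ofAdd_image, hPA]
    congr 1
    rw [← Submodule.span_int_eq_addSubgroupClosure, ← hspan]
  refine ⟨T, le_trans hcard hm, hclos, ?_⟩
  by_cases hm1 : m ≤ 1
  · exact Or.inl (le_trans hcard hm1)
  · right
    have hm2 : m = 2 := by omega
    subst hm2
    -- rank 2: the quotient is finite
    set u : Fin 2 → (Fin 2 → ℤ) := fun i => (bA i : Fin 2 → ℤ) with hu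
    set U : Matrix (Fin 2) (Fin 2) ℤ := Matrix.of (fun i j => u j i) with hU
    have key : ∀ y : Fin 2 → ℤ, U.mulVec y = ∑ j, y j • u j := by
      intro y
      funext i
      simp [hU, Matrix.mulVec, dotProduct, Finset.sum_apply, mul_comm]
    have hdet : U.det ≠ 0 := by
      intro h0
      obtain ⟨c, hc0, hUc⟩ := (Matrix.exists_mulVec_eq_zero_iff).mpr h0
      have : ∀ i, c i = 0 := by
        apply Fintype.linearIndependent_iff.mp li c
        rw [← key]
        exact hUc
      exact hc0 (funext this)
    have htor : ∀ x : Fin 2 → ℤ, U.det • x ∈ A := by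
      intro x
      have h1 : U.det • x = U.mulVec ((U.adjugate).mulVec x) := by
        rw [Matrix.mulVec_mulVec, Matrix.mul_adjugate, Matrix.smul_mulVec,
          Matrix.one_mulVec]
      rw [h1, key, hspan]
      exact Submodule.sum_mem _ fun j _ =>
        Submodule.smul_mem _ _ (Submodule.subset_span (Set.mem_range_self j))
    haveI : AddGroup.FG (Fin 2 → ℤ) := Module.Finite.iff_addGroup_fg.mp inferInstance
    have hfinQ : Finite ((Fin 2 → ℤ) ⧸ A.toAddSubgroup) := by
      apply AddCommGroup.finite_of_fg_torsion
      intro q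
      induction q using QuotientAddGroup.induction_on with
      | H v =>
        rw [isOfFinAddOrder_iff_nsmul_eq_zero]
        refine ⟨U.det.natAbs, Int.natAbs_pos.mpr hdet, ?_⟩
        have h1 : (U.det.natAbs : ℕ) • (QuotientAddGroup.mk v : (Fin 2 → ℤ) ⧸ A.toAddSubgroup)
            = QuotientAddGroup.mk (U.det.natAbs • v) :=
          ((QuotientAddGroup.mk' A.toAddSubgroup).map_nsmul U.det.natAbs v).symm
        rw [h1, QuotientAddGroup.eq_zero_iff]
        have h2 : (U.det.natAbs : ℤ) • v ∈ A := by
          rcases Int.natAbs_eq U.det with h | h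
          · rw [← h]; exact htor v
          · have h' : (U.det.natAbs : ℤ) = -U.det := by omega
            rw [h', neg_smul]
            exact A.neg_mem (htor v)
        rw [natCast_zsmul] at h2
        exact h2
    have hfinP : Finite (Multiplicative (Fin 2 → ℤ) ⧸ P) := by
      apply finite_mult_quot A.toAddSubgroup P _ hfinQ
      intro x
      rw [hPA]
      exact Iff.rfl
    rw [Subgroup.index_eq_card]
    exact Nat.card_ne_zero.mpr ⟨inferInstance, hfinP⟩

/-- if `Θ ∈ GL(2,ℤ)` is hyperbolic (no eigenvalue a root of unity;
equivalently `det Θ = 1` and `|tr Θ| > 2`, or `det Θ = −1` and `tr Θ ≠ 0`), then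
(a) every finite-index subgroup of `π_Θ = ℤ² ⋊_Θ ℤ` is generated by (at most)
three elements, and (b) every proper subgroup of infinite index is generated by
(at most) two elements. -/
theorem stmt14 (Θ : GL (Fin 2) ℤ)
    (hhyp : ((Θ : Matrix (Fin 2) (Fin 2) ℤ).det = 1 ∧
        2 < |(Θ : Matrix (Fin 2) (Fin 2) ℤ).trace|) ∨
      ((Θ : Matrix (Fin 2) (Fin 2) ℤ).det = -1 ∧
        (Θ : Matrix (Fin 2) (Fin 2) ℤ).trace ≠ 0)) :
    (∀ H : Subgroup (piTheta Θ), H.index ≠ 0 →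
      ∃ S : Finset (piTheta Θ), S.card ≤ 3 ∧ Subgroup.closure (S : Set (piTheta Θ)) = H) ∧
    (∀ H : Subgroup (piTheta Θ), H ≠ ⊤ → H.index = 0 →
      ∃ S : Finset (piTheta Θ), S.card ≤ 2 ∧ Subgroup.closure (S : Set (piTheta Θ)) = H) := by
  classical
  have main : ∀ H : Subgroup (piTheta Θ),
      (∃ S : Finset (piTheta Θ), S.card ≤ 3 ∧ Subgroup.closure (S : Set (piTheta Θ)) = H) ∧
      (H.index = 0 →
        ∃ S : Finset (piTheta Θ), S.card ≤ 2 ∧ Subgroup.closure (S : Set (piTheta Θ)) = H) := by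
    intro H
    set φ : piTheta Θ →* Multiplicative ℤ := SemidirectProduct.rightHom with hφ
    set ι : Multiplicative (Fin 2 → ℤ) →* piTheta Θ := SemidirectProduct.inl with hι
    obtain ⟨h, hh, hmap⟩ := image_cyclic φ H
    obtain ⟨T, hTcard, hTclos, hTalt⟩ := subgroup_mult_Z2 (H.comap ι)
    have hinf : Subgroup.map ι (H.comap ι) = H ⊓ φ.ker := by
      rw [Subgroup.map_comap_eq]
      rw [hι, hφ, SemidirectProduct.range_inl_eq_ker_rightHom]
      exact inf_comm _ _
    have hclosT' : Subgroup.closure ((T.image ι : Finset (piTheta Θ)) : Set (piTheta Θ))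
        = H ⊓ φ.ker := by
      rw [Finset.coe_image, ← MonoidHom.map_closure, hTclos]
      exact hinf
    constructor
    · refine ⟨insert h (T.image ι), ?_, ?_⟩
      · calc (insert h (T.image ι)).card ≤ (T.image ι).card + 1 := Finset.card_insert_le _ _
          _ ≤ 3 := by
            have h1 : (T.image ι).card ≤ T.card := Finset.card_image_le
            omega
      · rw [Finset.coe_insert]
        exact gen_lemma φ H h hh hmap (T.image ι) hclosT'
    · intro hidx
      by_cases hK : Subgroup.map φ H = ⊥
      · have hle : H ≤ φ.ker := by
          intro x hx
          have : φ x ∈ Subgroup.map φ H := Subgroup.mem_map_of_mem φ hx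
          rw [hK, Subgroup.mem_bot] at this
          exact this
        have hHeq : Subgroup.map ι (H.comap ι) = H := by
          rw [hinf, inf_eq_left.mpr hle]
        refine ⟨T.image ι, le_trans Finset.card_image_le hTcard, ?_⟩
        rw [Finset.coe_image, ← MonoidHom.map_closure, hTclos, hHeq]
      · rcases hTalt with hT1 | hPidx
        · refine ⟨insert h (T.image ι), ?_, ?_⟩
          · calc (insert h (T.image ι)).card ≤ (T.image ι).card + 1 := Finset.card_insert_le _ _
              _ ≤ 2 := by
                have h1 : (T.image ι).card ≤ T.card := Finset.card_image_le
                omega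
          · rw [Finset.coe_insert]
            exact gen_lemma φ H h hh hmap (T.image ι) hclosT'
        · exfalso
          have hfh : φ h ≠ 1 := by
            intro e
            rw [e, Subgroup.zpowers_one_eq_bot] at hmap
            exact hK hmap
          have hKidx : (Subgroup.map φ H).index ≠ 0 := by
            rw [hmap]; exact index_zpowers_ne_zero _ hfh
          have hrel : H.relIndex φ.ker ≠ 0 := by
            rw [← Subgroup.inf_relIndex_right, ← hinf]
            have e1 : (Subgroup.map ι (H.comap ι)).relIndex φ.ker
                = (Subgroup.map ι (H.comap ι)).relIndex ι.range := by
              rw [hι, hφ, SemidirectProduct.range_inl_eq_ker_rightHom]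
            rw [e1, ← Subgroup.index_comap,
              Subgroup.comap_map_eq_self_of_injective SemidirectProduct.inl_injective]
            exact hPidx
          have hsup : H.relIndex (H ⊔ φ.ker) ≠ 0 := relindex_sup_ne_zero H φ.ker hrel
          have hsupidx : (H ⊔ φ.ker).index ≠ 0 := by
            have e2 := Subgroup.index_map (H := H) φ
            rw [MonoidHom.range_eq_top_of_surjective φ
              (by rw [hφ]; exact SemidirectProduct.rightHom_surjective),
              Subgroup.index_top, mul_one] at e2
            rw [← e2]
            exact hKidx
          have e3 := Subgroup.relIndex_mul_index (le_sup_left : H ≤ H ⊔ φ.ker)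
          rw [hidx] at e3
          rcases Nat.mul_eq_zero.mp e3 with h0 | h0
          · exact hsup h0
          · exact hsupidx h0
  exact ⟨fun H _ => (main H).1, fun H _ hidx => (main H).2 hidx⟩
end

section
/- Let Θ ∈ GL(2,ℤ) be hyperbolic, i.e. det Θ = ±1 and no eigenvalue of Θ is a root of unity (equivalently: if det Θ = 1 then |tr Θ| > 2, and if det Θ = −1 then tr Θ ≠ 0). Then π_Θ = ℤ² ⋊_Θ ℤ is not virtually nilpotent: π_Θ has no nilpotent subgroup of finite index. -/
lemma my_detsubone (A : Matrix (Fin 2) (Fin 2) ℤ) : (A - 1).det = A.det - A.trace + 1 := by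
  simp [Matrix.det_fin_two, Matrix.trace_fin_two, Matrix.sub_apply, Matrix.one_apply]
  ring

lemma my_sq (A : Matrix (Fin 2) (Fin 2) ℤ) :
    A * A = A.trace • A - A.det • (1 : Matrix (Fin 2) (Fin 2) ℤ) := by
  ext i j
  simp only [Matrix.sub_apply, Matrix.smul_apply, smul_eq_mul, Matrix.mul_apply]
  fin_cases i <;> fin_cases j <;>
    simp [Fin.sum_univ_two, Matrix.trace_fin_two, Matrix.det_fin_two, Matrix.one_apply] <;> ring

lemma my_trace_rec (A : Matrix (Fin 2) (Fin 2) ℤ) (n : ℕ) :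
    (A ^ (n + 2)).trace = A.trace * (A ^ (n+1)).trace - A.det * (A ^ n).trace := by
  have h : A ^ (n+2) = A.trace • A ^ (n+1) - A.det • A ^ n := by
    calc A ^ (n+2) = A ^ n * (A * A) := by rw [pow_add, pow_two]
    _ = A ^ n * (A.trace • A - A.det • (1 : Matrix (Fin 2) (Fin 2) ℤ)) := by rw [my_sq]
    _ = A.trace • A ^ (n+1) - A.det • A ^ n := by
        rw [Matrix.mul_sub, mul_smul_comm, mul_smul_comm, mul_one, pow_succ]
  rw [h, Matrix.trace_sub, Matrix.trace_smul, Matrix.trace_smul, smul_eq_mul, smul_eq_mul]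

lemma my_seqA (t : ℤ) (ht : 3 ≤ |t|) (a : ℕ → ℤ) (h0 : a 0 = 2) (h1 : a 1 = t)
    (hrec : ∀ n, a (n+2) = t * a (n+1) - a n) :
    ∀ n, 3 ≤ |a (n+1)| ∧ |a n| ≤ |a (n+1)| := by
  intro n
  induction n with
  | zero =>
    have e : a (0+1) = t := h1
    have e2 : |(2:ℤ)| = 2 := rfl
    exact ⟨by rw [e]; omega, by rw [e, h0]; omega⟩
  | succ n ih =>
    obtain ⟨h3, h4⟩ := ih
    have e : a (n+1+1) = a (n+2) := rfl
    have key : 2 * |a (n+1)| ≤ |a (n+2)| := by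
      rw [hrec]
      have e1 : |t * a (n+1)| - |a n| ≤ |t * a (n+1) - a n| := abs_sub_abs_le_abs_sub _ _
      rw [abs_mul] at e1
      nlinarith [abs_nonneg (a (n+1))]
    rw [e]
    exact ⟨by omega, by omega⟩

lemma my_seqB (t : ℤ) (ht : 1 ≤ t) (a : ℕ → ℤ) (h0 : a 0 = 2) (h1 : a 1 = t)
    (hrec : ∀ n, a (n+2) = t * a (n+1) + a n) :
    ∀ n, 1 ≤ a n ∧ 1 ≤ a (n+1) ∧ 3 ≤ a (n+2) := by
  intro n
  induction n with
  | zero =>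
    refine ⟨by omega, (by omega : (1:ℤ) ≤ a 1), ?_⟩
    show (3:ℤ) ≤ a 2
    rw [(show a 2 = t * a 1 + a 0 from hrec 0), h1, h0]; nlinarith
  | succ n ih =>
    obtain ⟨i1, i2, i3⟩ := ih
    have e1 : a (n+1+1) = a (n+2) := rfl
    have e2 : a (n+1+2) = a (n+3) := rfl
    refine ⟨i2, by rw [e1]; omega, ?_⟩
    rw [e2, (show a (n+3) = t * a (n+2) + a (n+1) from hrec (n+1))]
    nlinarith

lemma my_det_pow_sub_one (A : Matrix (Fin 2) (Fin 2) ℤ)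
    (hhyp : (A.det = 1 ∧ 2 < |A.trace|) ∨ (A.det = -1 ∧ A.trace ≠ 0))
    (m : ℕ) (hm : 1 ≤ m) : (A ^ m - 1).det ≠ 0 := by
  have hd : (A ^ m - 1).det = A.det ^ m - (A ^ m).trace + 1 := by
    rw [my_detsubone, Matrix.det_pow]
  rw [hd]
  have htr0 : (A ^ 0).trace = 2 := by simp [Matrix.trace_one]
  have htr1 : (A ^ 1).trace = A.trace := by rw [pow_one]
  rcases hhyp with ⟨hdet, htr⟩ | ⟨hdet, htr⟩
  · have hs := my_seqA A.trace (by omega) (fun n => (A ^ n).trace) htr0 htr1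
      (fun n => by
        show (A ^ (n+2)).trace = A.trace * (A ^ (n+1)).trace - (A ^ n).trace
        rw [my_trace_rec, hdet]; ring)
    obtain ⟨k, rfl⟩ : ∃ k, m = k + 1 := ⟨m - 1, by omega⟩
    have h3 := (hs k).1
    simp only [hdet, one_pow]
    rcases abs_cases ((A ^ (k+1)).trace) with ⟨he, -⟩ | ⟨he, -⟩ <;> omega
  · rcases le_or_gt 1 A.trace with hpos | hneg
    · have hs := my_seqB A.trace hpos (fun n => (A ^ n).trace) htr0 htr1
        (fun n => by
          show (A ^ (n+2)).trace = A.trace * (A ^ (n+1)).trace + (A ^ n).trace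
          rw [my_trace_rec, hdet]; ring)
      rw [hdet]
      rcases Nat.even_or_odd m with he | ho
      · rw [he.neg_one_pow]
        obtain ⟨k, rfl⟩ : ∃ k, m = k + 2 := by
          rcases he with ⟨j, hj⟩; exact ⟨m - 2, by omega⟩
        have h3 := (hs k).2.2
        omega
      · rw [ho.neg_one_pow]
        have h1' := (hs m).1
        omega
    · have hneg' : 1 ≤ -A.trace := by omega
      have hs := my_seqB (-A.trace) hneg' (fun n => (-1) ^ n * (A ^ n).trace)
        (by simpa using htr0) (by simpa using htr1)
        (fun n => by
          show (-1) ^ (n+2) * (A ^ (n+2)).trace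
              = (-A.trace) * ((-1) ^ (n+1) * (A ^ (n+1)).trace) + (-1) ^ n * (A ^ n).trace
          rw [my_trace_rec, hdet]; ring)
      rw [hdet]
      rcases Nat.even_or_odd m with he | ho
      · rw [he.neg_one_pow]
        obtain ⟨k, rfl⟩ : ∃ k, m = k + 2 := by
          rcases he with ⟨j, hj⟩; exact ⟨m - 2, by omega⟩
        have h3 := (hs k).2.2
        rw [he.neg_one_pow] at h3
        omega
      · rw [ho.neg_one_pow]
        have h1' := (hs m).1
        rw [ho.neg_one_pow] at h1'
        omega

lemma my_aut_pow (Θ : GL (Fin 2) ℤ) (m : ℤ) (w : Multiplicative (Fin 2 → ℤ)) :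
    Multiplicative.toAdd
        (((AddEquiv.toMultiplicative (thetaAddAut Θ) :
            MulAut (Multiplicative (Fin 2 → ℤ))) ^ m) w)
      = ((Θ ^ m : GL (Fin 2) ℤ) : Matrix (Fin 2) (Fin 2) ℤ).mulVec (Multiplicative.toAdd w) := by
  induction m using Int.induction_on generalizing w with
  | zero => simp
  | succ n ih =>
    rw [zpow_add_one, MulAut.mul_apply, ih, zpow_add_one, Units.val_mul,
      ← Matrix.mulVec_mulVec]
    rfl
  | pred n ih =>
    rw [zpow_sub_one, MulAut.mul_apply, ih, zpow_sub_one, Units.val_mul,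
      ← Matrix.mulVec_mulVec]
    rfl

open scoped commutatorElement

lemma my_comm (Θ : GL (Fin 2) ℤ) (x g : piTheta Θ) (hx : x.right = 1) :
    ⁅x, g⁆.right = 1 ∧
    Multiplicative.toAdd ⁅x, g⁆.left
      = Multiplicative.toAdd x.left
        - ((Θ ^ (Multiplicative.toAdd g.right) : GL (Fin 2) ℤ) :
            Matrix (Fin 2) (Fin 2) ℤ).mulVec (Multiplicative.toAdd x.left) := by
  constructor
  · simp [commutatorElement_def, SemidirectProduct.mul_right, SemidirectProduct.inv_right, hx]
  · simp [commutatorElement_def, SemidirectProduct.mul_left, SemidirectProduct.mul_right,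
      SemidirectProduct.inv_left, SemidirectProduct.inv_right, hx, my_aut_pow]
    constructor <;> abel

/-- if `Θ ∈ GL(2,ℤ)` is hyperbolic (no eigenvalue a root of unity;
equivalently `det Θ = 1` and `|tr Θ| > 2`, or `det Θ = −1` and `tr Θ ≠ 0`), then
`π_Θ = ℤ² ⋊_Θ ℤ` is not virtually nilpotent: it has no nilpotent subgroup of
finite index. -/
theorem stmt16 (Θ : GL (Fin 2) ℤ)
    (hhyp : ((Θ : Matrix (Fin 2) (Fin 2) ℤ).det = 1 ∧
        2 < |(Θ : Matrix (Fin 2) (Fin 2) ℤ).trace|) ∨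
      ((Θ : Matrix (Fin 2) (Fin 2) ℤ).det = -1 ∧
        (Θ : Matrix (Fin 2) (Fin 2) ℤ).trace ≠ 0)) :
    ¬ ∃ H : Subgroup (piTheta Θ), H.index ≠ 0 ∧ Group.IsNilpotent H := by
  rintro ⟨H, hind, hnil⟩
  obtain ⟨k, hk0, -, hg⟩ := Subgroup.exists_pow_mem_of_index_ne_zero hind
    (SemidirectProduct.inr (φ := (zpowersHom (MulAut (Multiplicative (Fin 2 → ℤ)))
      (AddEquiv.toMultiplicative (thetaAddAut Θ)))) (Multiplicative.ofAdd (1 : ℤ)))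
  obtain ⟨j, hj0, -, ha⟩ := Subgroup.exists_pow_mem_of_index_ne_zero hind
    (SemidirectProduct.inl (φ := (zpowersHom (MulAut (Multiplicative (Fin 2 → ℤ)))
      (AddEquiv.toMultiplicative (thetaAddAut Θ))))
      (Multiplicative.ofAdd (fun _ => (1:ℤ) : Fin 2 → ℤ)))
  set g : piTheta Θ := (SemidirectProduct.inr (Multiplicative.ofAdd (1 : ℤ))) ^ k with hgdef
  set a : piTheta Θ :=
    (SemidirectProduct.inl (Multiplicative.ofAdd (fun _ => (1:ℤ) : Fin 2 → ℤ))) ^ j with hadef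
  have hgr : Multiplicative.toAdd g.right = (k : ℤ) := by
    have : g.right = SemidirectProduct.rightHom g := rfl
    rw [this, hgdef, map_pow, SemidirectProduct.rightHom_inr, toAdd_pow, toAdd_ofAdd]
    simp
  have har : a.right = 1 := by
    have : a.right = SemidirectProduct.rightHom a := rfl
    rw [this, hadef, map_pow, SemidirectProduct.rightHom_inl, one_pow]
  set w : Fin 2 → ℤ := Multiplicative.toAdd a.left with hwdef
  have hal : w = fun _ => (j : ℤ) := by
    rw [hwdef, hadef, ← map_pow, SemidirectProduct.left_inl]
    ext i
    simp [toAdd_pow]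
  have hw : w ≠ 0 := by
    rw [hal]
    intro h
    have := congrFun h 0
    simp at this
    omega
  set N : Matrix (Fin 2) (Fin 2) ℤ :=
    1 - ((Θ ^ (k : ℤ) : GL (Fin 2) ℤ) : Matrix (Fin 2) (Fin 2) ℤ) with hNdef
  have hNA : ((Θ ^ (k : ℤ) : GL (Fin 2) ℤ) : Matrix (Fin 2) (Fin 2) ℤ)
      = (Θ : Matrix (Fin 2) (Fin 2) ℤ) ^ k := by
    rw [zpow_natCast]
    exact Units.val_pow_eq_pow_val _ _
  have hdetN : N.det ≠ 0 := by
    have h1 : N = -(((Θ : Matrix (Fin 2) (Fin 2) ℤ) ^ k) - 1) := by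
      rw [hNdef, hNA, neg_sub]
    rw [h1, Matrix.det_neg, Fintype.card_fin]
    simpa using my_det_pow_sub_one (Θ : Matrix (Fin 2) (Fin 2) ℤ) hhyp k hk0
  -- the sequence of iterated commutators
  set gH : H := ⟨g, hg⟩ with hgH
  set c : ℕ → H := fun i => Nat.rec ⟨a, ha⟩ (fun _ y => ⁅y, gH⁆) i with hc
  have hcsucc : ∀ i, c (i+1) = ⁅c i, gH⁆ := fun i => rfl
  have claim1 : ∀ i, c i ∈ (⊤ : Subgroup H).lowerCentralSeries i := by
    intro i
    induction i with
    | zero => exact Subgroup.mem_top _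
    | succ i ih =>
      rw [hcsucc]
      exact Subgroup.commutator_mem_commutator ih (Subgroup.mem_top _)
  have claim2 : ∀ i, ((c i : piTheta Θ).right = 1 ∧
      Multiplicative.toAdd (c i : piTheta Θ).left = (N ^ i).mulVec w) := by
    intro i
    induction i with
    | zero =>
      refine ⟨har, ?_⟩
      rw [pow_zero, Matrix.one_mulVec]
      rfl
    | succ i ih =>
      have hcoe : ((c (i+1) : H) : piTheta Θ) = ⁅(c i : piTheta Θ), g⁆ := rfl
      obtain ⟨ihr, ihl⟩ := ih
      obtain ⟨h1, h2⟩ := my_comm Θ (c i : piTheta Θ) g ihr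
      refine ⟨by rw [hcoe]; exact h1, ?_⟩
      rw [hcoe, h2, ihl, hgr]
      rw [pow_succ' N i, ← Matrix.mulVec_mulVec, hNdef, Matrix.sub_mulVec, Matrix.one_mulVec]
  obtain ⟨nn, hnn⟩ := nilpotent_iff_lowerCentralSeries.mp hnil
  have hcnn : c nn = 1 := by
    have := claim1 nn
    rw [hnn] at this
    exact Subgroup.mem_bot.mp this
  have hzero : (N ^ nn).mulVec w = 0 := by
    rw [← (claim2 nn).2, hcnn]
    simp
  have : (N ^ nn).det = 0 := Matrix.exists_mulVec_eq_zero_iff.mp ⟨w, hw, hzero⟩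
  rw [Matrix.det_pow] at this
  exact pow_ne_zero _ hdetN this
end
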